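/- Let p be an odd prime, k := (p−1)/2, and t ≥ 1 an integer. Then the determinant of the k × k matrix whose (j,v) entry, for 1 ≤ j,v ≤ k, is p^{(2j−1)p^t}(B_{(2j−1)p^t}(v/p) − B_{(2j−1)p^t}), is a nonzero rational number with p-adic valuation equal to 0. -/

import Mathlib

open Finset

-- norm of a nonzero nat in ℚ_p
lemma aux_norm_natCast (p : ℕ) [Fact p.Prime] (m : ℕ) (hm : m ≠ 0) :
    ‖(m : ℚ_[p])‖ = (p : ℝ) ^ (-(padicValNat p m : ℤ)) := by
  rw [show ((m : ℚ_[p])) = ((m : ℚ) : ℚ_[p]) by norm_cast, Padic.eq_padicNorm,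
    padicNorm.eq_zpow_of_nonzero (by exact_mod_cast hm)]
  rw [padicValRat.of_nat]
  push_cast
  ring_nf

lemma aux_valNat_le (p : ℕ) [hp : Fact p.Prime] (m : ℕ) (hm : 1 ≤ m) :
    (padicValNat p m : ℤ) ≤ (m : ℤ) - 1 := by
  have h1 : p ^ padicValNat p m ∣ m := pow_padicValNat_dvd
  have h2 : p ^ padicValNat p m ≤ m := Nat.le_of_dvd hm h1
  have h3 : padicValNat p m < p ^ padicValNat p m :=
    Nat.lt_pow_self hp.out.one_lt
  omega

-- ‖p^(m-1)/m‖ ≤ 1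
lemma aux_norm_pow_div (p : ℕ) [hp : Fact p.Prime] (m : ℕ) (hm : 1 ≤ m) :
    ‖((p : ℚ_[p]) ^ (m - 1) / (m : ℚ_[p]))‖ ≤ 1 := by
  have hm0 : (m : ℚ_[p]) ≠ 0 := by
    exact_mod_cast Nat.cast_ne_zero.mpr (by omega)
  rw [norm_div, norm_pow, Padic.norm_p, aux_norm_natCast p m (by omega)]
  have hp0 : (p:ℝ) ≠ 0 := by exact_mod_cast hp.out.pos.ne'
  rw [inv_pow, ← zpow_natCast (p:ℝ), ← zpow_neg, div_eq_mul_inv, ← zpow_neg, neg_neg,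
    ← zpow_add₀ hp0]
  have hp1 : (1:ℝ) ≤ (p:ℝ) := by exact_mod_cast hp.out.one_le
  apply zpow_le_one_of_nonpos₀ hp1
  have := aux_valNat_le p m hm
  omega




/-- von Staudt–Clausen type bound: `p * B n` is a `p`-adic integer. -/
lemma aux_norm_p_mul_bernoulli (p : ℕ) [hp : Fact p.Prime] :
    ∀ n : ℕ, ‖(((p : ℚ) * bernoulli n : ℚ) : ℚ_[p])‖ ≤ 1 := by
  intro n
  induction n using Nat.strong_induction_on with
  | _ n IH =>
  have hp0 : (p : ℚ) ≠ 0 := by exact_mod_cast hp.out.pos.ne'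
  have hfaul := _root_.sum_range_pow p n
  rw [Finset.sum_range_succ] at hfaul
  have hchoose : ((n + 1).choose n : ℚ) = (n : ℚ) + 1 := by
    rw [Nat.choose_succ_self_right]; push_cast; ring
  have hn1 : ((n : ℚ) + 1) ≠ 0 := by positivity
  have hlast : bernoulli n * ((n + 1).choose n : ℚ) * (p : ℚ) ^ (n + 1 - n) / (n + 1)
      = (p : ℚ) * bernoulli n := by
    rw [hchoose]
    have : n + 1 - n = 1 := by omega
    rw [this]
    field_simp
  have key : (p : ℚ) * bernoulli n
      = (∑ k ∈ range p, (k : ℚ) ^ n)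
        - ∑ i ∈ range n, bernoulli i * ((n + 1).choose i : ℚ) * (p : ℚ) ^ (n + 1 - i) / (n + 1) := by
    rw [hfaul, hlast]; push_cast; ring
  rw [key]
  push_cast
  rw [sub_eq_add_neg]
  have h1 : ‖∑ k ∈ range p, ((k : ℚ_[p]) ^ n)‖ ≤ 1 := by
    apply IsUltrametricDist.norm_sum_le_of_forall_le_of_nonneg zero_le_one
    intro k _
    rw [norm_pow]
    calc ‖(k : ℚ_[p])‖ ^ n ≤ 1 ^ n := by
          apply pow_le_pow_left₀ (norm_nonneg _)
          exact_mod_cast Padic.norm_int_le_one (k : ℤ)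
      _ = 1 := one_pow n
  have h2 : ‖-∑ i ∈ range n,
      ((bernoulli i : ℚ) : ℚ_[p]) * (((n + 1).choose i : ℕ) : ℚ_[p]) * (p : ℚ_[p]) ^ (n + 1 - i)
        / ((n : ℚ_[p]) + 1)‖ ≤ 1 := by
    rw [norm_neg]
    apply IsUltrametricDist.norm_sum_le_of_forall_le_of_nonneg zero_le_one
    intro i hi
    rw [mem_range] at hi
    have hidq : ((n.choose i : ℕ) : ℚ) * ((n : ℚ) + 1)
        = (((n + 1).choose i : ℕ) : ℚ) * ((n + 1 - i : ℕ) : ℚ) := by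
      have h' : (n.choose i * (n + 1) : ℕ) = ((n + 1).choose i * (n + 1 - i) : ℕ) :=
        Nat.choose_mul_succ_eq n i
      exact_mod_cast h'
    have hm0 : ((n + 1 - i : ℕ) : ℚ) ≠ 0 := Nat.cast_ne_zero.mpr (by omega)
    have hppow : (p : ℚ) ^ (n + 1 - i) = (p : ℚ) * (p : ℚ) ^ (n - i) := by
      rw [← pow_succ']; congr 1; omega
    have hq : bernoulli i * (((n + 1).choose i : ℕ) : ℚ) * (p : ℚ) ^ (n + 1 - i) / ((n : ℚ) + 1)
        = ((p : ℚ) * bernoulli i) * ((n.choose i : ℕ) : ℚ)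
          * ((p : ℚ) ^ ((n + 1 - i) - 1) / ((n + 1 - i : ℕ) : ℚ)) := by
      have hsub : (n + 1 - i) - 1 = n - i := by omega
      rw [hsub, hppow]
      rw [div_eq_iff hn1, mul_div_assoc', div_mul_eq_mul_div, eq_div_iff hm0]
      linear_combination (-(bernoulli i * (p : ℚ) * (p : ℚ) ^ (n - i))) * hidq
    have hcast := congrArg (fun q : ℚ => (q : ℚ_[p])) hq
    push_cast at hcast
    rw [hcast, norm_mul, norm_mul, norm_mul]
    have hX : ‖(p : ℚ_[p]) * ((bernoulli i : ℚ) : ℚ_[p])‖ ≤ 1 := by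
      have := IH i hi; push_cast at this; exact this
    rw [norm_mul] at hX
    have hC : ‖((n.choose i : ℕ) : ℚ_[p])‖ ≤ 1 := by
      exact_mod_cast Padic.norm_int_le_one (n.choose i : ℤ)
    have hD := aux_norm_pow_div p (n + 1 - i) (by omega)
    exact mul_le_one₀ (mul_le_one₀ hX (norm_nonneg _) hC) (norm_nonneg _) hD
  calc ‖_ + _‖ ≤ max _ _ := Padic.nonarchimedean _ _
    _ ≤ 1 := max_le h1 h2

lemma aux_entry_eq (p c n : ℕ) (hp : (p : ℚ) ≠ 0) (hn : 1 ≤ n) :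
    (p : ℚ) ^ n * ((Polynomial.bernoulli n).eval ((c : ℚ) / (p : ℚ)) - bernoulli n)
      = (c : ℚ) ^ n
        + ∑ i ∈ Ico 1 n, bernoulli i * (n.choose i : ℚ) * (c : ℚ) ^ (n - i) * (p : ℚ) ^ i := by
  have heval : (Polynomial.bernoulli n).eval ((c : ℚ) / (p : ℚ))
      = ∑ i ∈ range (n + 1), bernoulli i * (n.choose i : ℚ) * ((c : ℚ) / (p : ℚ)) ^ (n - i) := by
    rw [Polynomial.bernoulli, Polynomial.eval_finset_sum]
    refine sum_congr rfl fun i _ => ?_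
    rw [Polynomial.eval_monomial]
  rw [heval, sum_range_succ, Nat.choose_self, Nat.sub_self]
  simp only [pow_zero, Nat.cast_one, mul_one]
  rw [add_sub_cancel_right, mul_sum]
  have hterm : ∀ i ∈ range n,
      (p : ℚ) ^ n * (bernoulli i * (n.choose i : ℚ) * ((c : ℚ) / (p : ℚ)) ^ (n - i))
        = bernoulli i * (n.choose i : ℚ) * (c : ℚ) ^ (n - i) * (p : ℚ) ^ i := by
    intro i hi
    rw [mem_range] at hi
    rw [div_pow]
    have h1 : (p : ℚ) ^ i = (p : ℚ) ^ n / (p : ℚ) ^ (n - i) := by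
      rw [div_eq_mul_inv, ← pow_sub₀ _ hp (by omega : n - i ≤ n)]
      congr 1; omega
    rw [h1]
    field_simp
  rw [sum_congr rfl hterm, range_eq_Ico, sum_eq_sum_Ico_succ_bot (by omega : 0 < n)]
  norm_num





lemma aux_nat_norm_le_one (p : ℕ) [Fact p.Prime] (m : ℕ) : ‖((m : ℕ) : ℚ_[p])‖ ≤ 1 := by
  exact_mod_cast Padic.norm_int_le_one (m : ℤ)

lemma aux_entry_norm (p : ℕ) [hp : Fact p.Prime] (hodd : Odd p) (n c : ℕ) (hn : 1 ≤ n) :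
    ‖(((p : ℚ) ^ n * ((Polynomial.bernoulli n).eval ((c : ℚ) / (p : ℚ)) - bernoulli n) : ℚ) : ℚ_[p])
      - ((c : ℚ_[p])) ^ n‖ ≤ (p : ℝ)⁻¹ := by
  have hp0 : (p : ℚ) ≠ 0 := by exact_mod_cast hp.out.pos.ne'
  have hpR : (0:ℝ) ≤ (p : ℝ)⁻¹ := by positivity
  rw [aux_entry_eq p c n hp0 hn]
  push_cast
  rw [add_comm, add_sub_assoc, sub_self, add_zero]
  apply IsUltrametricDist.norm_sum_le_of_forall_le_of_nonneg hpR
  intro i hi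
  rw [mem_Ico] at hi
  obtain ⟨hi1, hi2⟩ := hi
  have hC : ‖((n.choose i : ℕ) : ℚ_[p])‖ ≤ 1 := aux_nat_norm_le_one p _
  have hc : ∀ m : ℕ, ‖((c : ℚ_[p])) ^ m‖ ≤ 1 := fun m => by
    rw [norm_pow]
    exact pow_le_one₀ (norm_nonneg _) (aux_nat_norm_le_one p c)
  rcases eq_or_lt_of_le hi1 with h1 | h2
  · -- i = 1
    subst h1
    rw [norm_mul, norm_mul, norm_mul, pow_one, Padic.norm_p]
    have hB1 : ‖((bernoulli 1 : ℚ) : ℚ_[p])‖ ≤ 1 := by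
      rw [bernoulli_one]
      have h2 : ‖(2 : ℚ_[p])‖ = 1 := by
        refine le_antisymm (by exact_mod_cast Padic.norm_int_le_one (2 : ℤ)) ?_
        by_contra hlt
        push_neg at hlt
        have := (PadicInt.norm_int_lt_one_iff_dvd (p := p) (2 : ℤ)).mp (by rw [PadicInt.norm_def]; exact_mod_cast hlt)
        have hp2 : p ∣ 2 := by exact_mod_cast this
        have hpeq : p = 2 := (Nat.prime_dvd_prime_iff_eq hp.out Nat.prime_two).mp hp2
        rw [hpeq] at hodd
        exact (Nat.not_odd_iff_even.mpr (by norm_num)) hodd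
      have hval : ((-1/2 : ℚ) : ℚ_[p]) = -1/2 := by push_cast; ring
      rw [hval, norm_div, norm_neg, norm_one, h2]
      norm_num
    have hcc := hc (n - 1)
    calc ‖((bernoulli 1 : ℚ) : ℚ_[p])‖ * ‖((n.choose 1 : ℕ) : ℚ_[p])‖ * ‖((c : ℚ_[p])) ^ (n - 1)‖
          * (p : ℝ)⁻¹ ≤ 1 * 1 * 1 * (p : ℝ)⁻¹ := by gcongr
      _ = (p : ℝ)⁻¹ := by ring
  · -- 2 ≤ i
    have hsplit : ((bernoulli i : ℚ) : ℚ_[p]) * ((n.choose i : ℕ) : ℚ_[p])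
          * ((c : ℚ_[p])) ^ (n - i) * (p : ℚ_[p]) ^ i
        = (((p : ℚ) * bernoulli i : ℚ) : ℚ_[p]) * ((n.choose i : ℕ) : ℚ_[p])
          * ((c : ℚ_[p])) ^ (n - i) * (p : ℚ_[p]) ^ (i - 1) := by
      push_cast
      have : (p : ℚ_[p]) ^ i = (p : ℚ_[p]) * (p : ℚ_[p]) ^ (i - 1) := by
        rw [← pow_succ']; congr 1; omega
      rw [this]; ring
    rw [hsplit, norm_mul, norm_mul, norm_mul, norm_pow, norm_pow, Padic.norm_p]
    have hB := aux_norm_p_mul_bernoulli p i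
    have hcc := hc (n - i)
    rw [norm_pow] at hcc
    calc ‖(((p : ℚ) * bernoulli i : ℚ) : ℚ_[p])‖ * ‖((n.choose i : ℕ) : ℚ_[p])‖
          * ‖((c : ℚ_[p]))‖ ^ (n - i) * ((p : ℝ)⁻¹) ^ (i - 1)
        ≤ 1 * 1 * 1 * ((p : ℝ)⁻¹) ^ (i - 1) := by gcongr
      _ = ((p : ℝ)⁻¹) ^ (i - 1) := by ring
      _ ≤ ((p : ℝ)⁻¹) ^ 1 := by
          apply pow_le_pow_of_le_one hpR ?_ (by omega)
          rw [inv_le_one_iff₀]; right; exact_mod_cast hp.out.one_le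
      _ = (p : ℝ)⁻¹ := pow_one _

lemma aux_det_zmod (p t : ℕ) [hp : Fact p.Prime] (hodd : Odd p) :
    (Matrix.of fun j v : Fin ((p - 1) / 2) =>
      (((v.val + 1 : ℕ)) : ZMod p) ^ ((2 * (j.val + 1) - 1) * p ^ t)).det ≠ 0 := by
  haveI : NeZero p := ⟨hp.out.pos.ne'⟩
  have hp2 : p % 2 = 1 := Nat.odd_iff.mp hodd
  have hp1 : 1 < p := hp.out.one_lt
  set d := (p - 1) / 2 with hd
  have hdp : 2 * d = p - 1 := by omega
  set x : Fin d → ZMod p := fun v => ((v.val + 1 : ℕ) : ZMod p) with hx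
  have hM : (Matrix.of fun j v : Fin d =>
        (((v.val + 1 : ℕ)) : ZMod p) ^ ((2 * (j.val + 1) - 1) * p ^ t))
      = Matrix.of fun j v : Fin d => x v * (Matrix.transpose (Matrix.vandermonde fun u => x u ^ 2) j v) := by
    ext j v
    simp only [Matrix.of_apply, Matrix.transpose_apply, Matrix.vandermonde_apply]
    rw [pow_mul, ZMod.pow_card_pow]
    have h21 : 2 * (j.val + 1) - 1 = 2 * j.val + 1 := by omega
    rw [hx, h21, pow_succ, pow_mul]
    ring
  rw [hM, Matrix.det_mul_row, Matrix.det_transpose]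
  apply mul_ne_zero
  · rw [Finset.prod_ne_zero_iff]
    intro v _
    intro h0
    rw [hx] at h0
    have hdvd := (ZMod.natCast_eq_zero_iff _ p).mp h0
    have hle := Nat.le_of_dvd (by omega) hdvd
    have hv := v.isLt
    omega
  · rw [Matrix.det_vandermonde_ne_zero_iff]
    intro v w hvw
    have hfac : (x v - x w) * (x v + x w) = 0 := by linear_combination hvw
    rcases mul_eq_zero.mp hfac with h | h
    · have heq : ((v.val + 1 : ℕ) : ZMod p) = ((w.val + 1 : ℕ) : ZMod p) := by
        rw [sub_eq_zero] at h; exact h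
      have hval := congrArg ZMod.val heq
      have hv := v.isLt; have hw := w.isLt
      rw [ZMod.val_cast_of_lt (by omega), ZMod.val_cast_of_lt (by omega)] at hval
      exact Fin.ext (by omega)
    · exfalso
      have hsum : (((v.val + 1) + (w.val + 1) : ℕ) : ZMod p) = 0 := by
        push_cast
        push_cast [hx] at h
        linear_combination h
      have hdvd := (ZMod.natCast_eq_zero_iff _ p).mp hsum
      have hle := Nat.le_of_dvd (by omega) hdvd
      have hv := v.isLt; have hw := w.isLt
      omega






lemma aux_nat_norm_le_one' (p : ℕ) [Fact p.Prime] (m : ℕ) : ‖((m : ℕ) : ℚ_[p])‖ ≤ 1 := by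
  exact_mod_cast Padic.norm_int_le_one (m : ℤ)

/-- Let `p` be an odd prime, `k = (p−1)/2`, `t ≥ 1`. The determinant of the `k × k` matrix
with (1-indexed) `(j,v)` entry `p^{(2j−1)p^t}(B_{(2j−1)p^t}(v/p) − B_{(2j−1)p^t})` is a
nonzero rational number with `p`-adic valuation `0`. -/
theorem det_odd_bernoulli_padic (p t : ℕ) (hp : p.Prime) (hodd : Odd p) (ht : 1 ≤ t) :
    Matrix.det (Matrix.of fun j v : Fin ((p - 1) / 2) =>
      (p : ℚ) ^ ((2 * (j.val + 1) - 1) * p ^ t) *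
        ((Polynomial.bernoulli ((2 * (j.val + 1) - 1) * p ^ t)).eval
            (((v.val + 1 : ℕ) : ℚ) / (p : ℚ)) -
          bernoulli ((2 * (j.val + 1) - 1) * p ^ t))) ≠ 0 ∧
    padicValRat p
      (Matrix.det (Matrix.of fun j v : Fin ((p - 1) / 2) =>
        (p : ℚ) ^ ((2 * (j.val + 1) - 1) * p ^ t) *
          ((Polynomial.bernoulli ((2 * (j.val + 1) - 1) * p ^ t)).eval
              (((v.val + 1 : ℕ) : ℚ) / (p : ℚ)) -
            bernoulli ((2 * (j.val + 1) - 1) * p ^ t)))) = 0 := by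
  haveI hpf : Fact p.Prime := ⟨hp⟩
  set d := (p - 1) / 2 with hd
  set n : Fin d → ℕ := fun j => (2 * (j.val + 1) - 1) * p ^ t with hn
  set M : Matrix (Fin d) (Fin d) ℚ := Matrix.of fun j v : Fin d =>
      (p : ℚ) ^ ((2 * (j.val + 1) - 1) * p ^ t) *
        ((Polynomial.bernoulli ((2 * (j.val + 1) - 1) * p ^ t)).eval
            (((v.val + 1 : ℕ) : ℚ) / (p : ℚ)) -
          bernoulli ((2 * (j.val + 1) - 1) * p ^ t)) with hM
  have hn1 : ∀ j : Fin d, 1 ≤ n j := by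
    intro j
    have : 0 < p ^ t := Nat.pow_pos hp.pos
    have : 1 ≤ 2 * (j.val + 1) - 1 := by omega
    calc 1 ≤ 1 * 1 := by norm_num
      _ ≤ (2 * (j.val + 1) - 1) * p ^ t := Nat.mul_le_mul ‹_› (by omega)
  -- entry norm facts
  have hnorm : ∀ j v : Fin d,
      ‖((M j v : ℚ) : ℚ_[p]) - (((v.val + 1 : ℕ)) : ℚ_[p]) ^ (n j)‖ ≤ (p : ℝ)⁻¹ := by
    intro j v
    exact aux_entry_norm p hodd (n j) (v.val + 1) (hn1 j)
  have hplt : (p : ℝ)⁻¹ < 1 := by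
    rw [inv_lt_one_iff₀]; right; exact_mod_cast hp.one_lt
  have hle1 : ∀ j v : Fin d, ‖((M j v : ℚ) : ℚ_[p])‖ ≤ 1 := by
    intro j v
    have h1 := hnorm j v
    have h2 : ‖(((v.val + 1 : ℕ)) : ℚ_[p]) ^ (n j)‖ ≤ 1 := by
      rw [norm_pow]
      exact pow_le_one₀ (norm_nonneg _) (aux_nat_norm_le_one' p _)
    calc ‖((M j v : ℚ) : ℚ_[p])‖
        = ‖(((M j v : ℚ) : ℚ_[p]) - (((v.val + 1 : ℕ)) : ℚ_[p]) ^ (n j))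
            + (((v.val + 1 : ℕ)) : ℚ_[p]) ^ (n j)‖ := by ring_nf
      _ ≤ max _ _ := Padic.nonarchimedean _ _
      _ ≤ 1 := max_le (le_trans h1 hplt.le) h2
  -- the integral matrix
  set D : Matrix (Fin d) (Fin d) ℤ_[p] :=
    Matrix.of (fun j v : Fin d => (⟨((M j v : ℚ) : ℚ_[p]), hle1 j v⟩ : ℤ_[p])) with hD
  have hdet : ((M.det : ℚ) : ℚ_[p]) = ((D.det : ℤ_[p]) : ℚ_[p]) := by
    have h1 : ((Rat.castHom ℚ_[p]) M.det) = (M.map (Rat.castHom ℚ_[p])).det :=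
      RingHom.map_det _ _
    have h2 : ((PadicInt.Coe.ringHom (p := p)) D.det) = (D.map (PadicInt.Coe.ringHom)).det :=
      RingHom.map_det _ _
    have h3 : M.map (Rat.castHom ℚ_[p]) = D.map (PadicInt.Coe.ringHom) := by
      ext j v; rfl
    rw [h3] at h1; exact h1.trans h2.symm
  -- reduction mod p
  have hred : PadicInt.toZMod D.det
      = (Matrix.of fun j v : Fin d =>
          (((v.val + 1 : ℕ)) : ZMod p) ^ ((2 * (j.val + 1) - 1) * p ^ t)).det := by
    rw [RingHom.map_det]
    congr 1
    ext j v
    have hsub : PadicInt.toZMod (D j v - (((v.val + 1) ^ (n j) : ℕ) : ℤ_[p])) = 0 := by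
      have hnd : ‖D j v - (((v.val + 1) ^ (n j) : ℕ) : ℤ_[p])‖ < 1 := by
        have e1 : ((D j v : ℤ_[p]) : ℚ_[p]) = ((M j v : ℚ) : ℚ_[p]) := rfl
        have e2 : ((((v.val + 1) ^ (n j) : ℕ) : ℤ_[p]) : ℚ_[p])
            = (((v.val + 1 : ℕ)) : ℚ_[p]) ^ (n j) := by push_cast; ring
        rw [PadicInt.norm_def, PadicInt.coe_sub, e1, e2]
        exact lt_of_le_of_lt (hnorm j v) hplt
      have hdvd : (p : ℤ_[p]) ∣ (D j v - (((v.val + 1) ^ (n j) : ℕ) : ℤ_[p])) :=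
        (PadicInt.norm_lt_one_iff_dvd _).mp hnd
      obtain ⟨y, hy⟩ := hdvd
      rw [hy, map_mul, map_natCast, ZMod.natCast_self, zero_mul]
    rw [map_sub] at hsub
    have h5 : PadicInt.toZMod (D j v)
        = PadicInt.toZMod ((((v.val + 1) ^ (n j) : ℕ)) : ℤ_[p]) := sub_eq_zero.mp hsub
    have h4 : PadicInt.toZMod ((((v.val + 1) ^ (n j) : ℕ)) : ℤ_[p])
        = (((v.val + 1 : ℕ)) : ZMod p) ^ ((2 * (j.val + 1) - 1) * p ^ t) := by
      rw [map_natCast]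
      push_cast
      rfl
    simp only [Matrix.map_apply, Matrix.of_apply]
    exact h5.trans h4
  have hdetne := aux_det_zmod p t hodd
  have hD1 : ‖D.det‖ = 1 := by
    refine le_antisymm (PadicInt.norm_le_one _) (not_lt.mp ?_)
    intro hlt
    obtain ⟨y, hy⟩ := (PadicInt.norm_lt_one_iff_dvd _).mp hlt
    have hzero : PadicInt.toZMod D.det = 0 := by
      rw [hy, map_mul, map_natCast, ZMod.natCast_self, zero_mul]
    rw [hred] at hzero
    exact hdetne hzero
  have hQn : ‖((M.det : ℚ) : ℚ_[p])‖ = 1 := by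
    rw [hdet, ← PadicInt.norm_def]; exact hD1
  have hpn : padicNorm p M.det = 1 := by
    rw [Padic.eq_padicNorm] at hQn; exact_mod_cast hQn
  have hne : M.det ≠ 0 := by
    intro h; rw [h, padicNorm.zero] at hpn; norm_num at hpn
  refine ⟨hne, ?_⟩
  have hz := padicNorm.eq_zpow_of_nonzero (p := p) hne
  rw [hpn] at hz
  have hp0Q : (0:ℚ) ≤ (p:ℚ) := by positivity
  have hpne1 : (p:ℚ) ≠ 1 := by exact_mod_cast hp.one_lt.ne'
  have hv0 := (zpow_eq_one_iff_right₀ hp0Q hpne1).mp hz.symm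
  omega
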